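/- For y with y ∉ {0, ±1} and parameters Y, Y_1 with Y_1 ≠ 0, set d = (Y_1 - Y)/Y_1 and α = (d + y)/(y^2 (1 + d y)) (assuming 1 + d y ≠ 0). If L_i^{(0)} = (1 - y^{i+1})/((1+y)^i (1-y)) and L_i^{(1)} = Y·L_i^{(0)} + (Y_1 - Y)·L_{i-1}^{(0)} (with L_{-1}^{(0)} = 0), then L_i^{(1)} = Y_1·(1 + d y)·(1 - α y^{i+2}) / ((1+y)^i (1 - y)) for all i ≥ 0. -/

import Mathlib

/-- with `d = (Y₁-Y)/Y₁` and `α = (d+y)/(y²(1+dy))`, the sequence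
`L_i⁽¹⁾ = Y·L_i⁽⁰⁾ + (Y₁-Y)·L_{i-1}⁽⁰⁾` (with `L₋₁⁽⁰⁾ = 0`) built from
`L_i⁽⁰⁾ = (1-y^{i+1})/((1+y)^i(1-y))` equals
`Y₁(1+dy)(1-αy^{i+2})/((1+y)^i(1-y))`. -/
theorem stmt5 {F : Type*} [Field F] (y Y Y1 : F)
    (hy0 : y ≠ 0) (hy1 : y ≠ 1) (hym : y ≠ -1) (hY1 : Y1 ≠ 0)
    (d α : F) (hd : d = (Y1 - Y) / Y1) (hdy : 1 + d * y ≠ 0)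
    (hα : α = (d + y) / (y ^ 2 * (1 + d * y)))
    (L0 L1 : ℕ → F)
    (hL0 : ∀ i : ℕ, L0 i = (1 - y ^ (i + 1)) / ((1 + y) ^ i * (1 - y)))
    (hL1z : L1 0 = Y * L0 0)
    (hL1 : ∀ i ≥ 1, L1 i = Y * L0 i + (Y1 - Y) * L0 (i - 1)) :
    ∀ i : ℕ, L1 i = Y1 * (1 + d * y) * (1 - α * y ^ (i + 2)) / ((1 + y) ^ i * (1 - y)) := by
  have h1y : (1 : F) - y ≠ 0 := sub_ne_zero.mpr (Ne.symm hy1)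
  have h1y' : (1 : F) + y ≠ 0 := by
    intro h; apply hym; linear_combination h
  subst hα hd
  have key : Y1 + (Y1 - Y) * y ≠ 0 := by
    intro h; apply hdy
    field_simp
    linear_combination h
  have key2 : -(Y * y ^ 3) + y ^ 2 * Y1 + y ^ 3 * Y1 ≠ 0 := by
    intro h
    apply mul_ne_zero (pow_ne_zero 2 hy0) key
    linear_combination h
  intro i
  match i with
  | 0 =>
    rw [hL1z, hL0 0]
    field_simp [key2, (by rwa [mul_comm] at key : Y1 + y * (Y1 - Y) ≠ 0)]
    ring
  | (n+1) =>
    rw [hL1 (n+1) (by omega), hL0, hL0]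
    simp only [Nat.add_sub_cancel]
    field_simp [key2, (by rwa [mul_comm] at key : Y1 + y * (Y1 - Y) ≠ 0)]
    ring
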